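/- Every permutation in S_n belongs to exactly one of the codes C_{0,n}, C_{1,n}, …, C_{n−1,n}; that is, the codes C_{T,n} for T = 0,1,…,n−1 form a partition of S_n. -/

import Mathlib

/-- Underlying function of the suffix block transposition `κ_{i,s}`:
`j ↦ j` for `j < i`, and `j ↦ i + ((j - i + s) mod (n - i))` for `i ≤ j ≤ n-1`. -/
def kappaFun (n i s : ℕ) (j : Fin n) : Fin n :=
  if h : (j : ℕ) < i then j
  else ⟨i + (((j : ℕ) - i + s) % (n - i)), by
    have hj := j.isLt
    have hpos : 0 < n - i := by omega
    have hm := Nat.mod_lt ((j : ℕ) - i + s) hpos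
    omega⟩

theorem kappaFun_injective (n i s : ℕ) : Function.Injective (kappaFun n i s) := by
  intro a b hab
  unfold kappaFun at hab
  by_cases ha : (a : ℕ) < i <;> by_cases hb : (b : ℕ) < i
  · rw [dif_pos ha, dif_pos hb] at hab
    exact hab
  · rw [dif_pos ha, dif_neg hb] at hab
    have h := congrArg Fin.val hab
    simp only at h
    omega
  · rw [dif_neg ha, dif_pos hb] at hab
    have h := congrArg Fin.val hab
    simp only at h
    omega
  · rw [dif_neg ha, dif_neg hb] at hab
    have h := congrArg Fin.val hab
    simp only at h
    have h1 : ((a : ℕ) - i + s) % (n - i) = ((b : ℕ) - i + s) % (n - i) := by omega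
    have h2 : ((a : ℕ) - i) % (n - i) = ((b : ℕ) - i) % (n - i) :=
      Nat.ModEq.add_right_cancel' s h1
    have ha' : (a : ℕ) - i < n - i := by have := a.isLt; omega
    have hb' : (b : ℕ) - i < n - i := by have := b.isLt; omega
    rw [Nat.mod_eq_of_lt ha', Nat.mod_eq_of_lt hb'] at h2
    exact Fin.ext (by omega)

/-- The suffix block transposition `κ_{i,s}` as a permutation of `Fin n`. -/
noncomputable def kappa (n i s : ℕ) : Equiv.Perm (Fin n) :=
  Equiv.ofBijective _ (Finite.injective_iff_bijective.mp (kappaFun_injective n i s))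

/-- `V_n`: vectors `[a_0,…,a_{n-1}]` with `1 ≤ a_j ≤ j+1` for each `j`. -/
def Vn (n : ℕ) : Set (Fin n → ℕ) :=
  {a | ∀ j : Fin n, 1 ≤ a j ∧ a j ≤ (j : ℕ) + 1}

/-- `Φ([a_0,…,a_{n-1}]) = κ_{n-2,a_1} ∘ κ_{n-3,a_2} ∘ ⋯ ∘ κ_{1,a_{n-2}} ∘ κ_{0,a_{n-1}}`
(the factor for `j = 0` is `κ_{n-1,a_0}`, which is the identity permutation). -/
noncomputable def Phi (n : ℕ) (a : Fin n → ℕ) : Equiv.Perm (Fin n) :=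
  ((List.finRange n).map (fun (j : Fin n) => kappa n (n - 1 - (j : ℕ)) (a j))).prod

-- auxiliary lemmas
lemma kappa_apply (n i s : ℕ) (x : Fin n) : kappa n i s x = kappaFun n i s x := rfl

lemma kappa_fix (n i s : ℕ) (x : Fin n) (h : (x : ℕ) < i) : kappa n i s x = x := by
  rw [kappa_apply]; unfold kappaFun; rw [dif_pos h]

lemma kappa_val_ge (n i s : ℕ) (x : Fin n) (h : ¬ (x : ℕ) < i) :
    (kappa n i s x : ℕ) = i + (((x : ℕ) - i + s) % (n - i)) := by
  rw [kappa_apply]; unfold kappaFun; rw [dif_neg h]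

lemma prod_fix {n : ℕ} (l : List (Equiv.Perm (Fin n))) (x : Fin n)
    (h : ∀ p ∈ l, p x = x) : l.prod x = x := by
  induction l with
  | nil => rfl
  | cons p l ih =>
    rw [List.prod_cons]
    have : l.prod x = x := ih (fun q hq => h q (List.mem_cons_of_mem _ hq))
    rw [Equiv.Perm.mul_apply, this]
    exact h p List.mem_cons_self

lemma kappa_cancel (n m s s' : ℕ) (hs : 1 ≤ s) (hs' : 1 ≤ s') (h1 : s ≤ n - m)
    (h2 : s' ≤ n - m) (y : Fin n) (hy : m ≤ (y : ℕ))
    (h : kappa n m s y = kappa n m s' y) : s = s' := by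
  have hv := congrArg Fin.val h
  rw [kappa_val_ge n m s y (by omega), kappa_val_ge n m s' y (by omega)] at hv
  have h1' : ((y : ℕ) - m + s) % (n - m) = ((y : ℕ) - m + s') % (n - m) := by omega
  have h2' : s % (n - m) = s' % (n - m) := Nat.ModEq.add_left_cancel' _ h1'
  have hnm : 0 < n - m := by have := y.isLt; omega
  rcases Nat.lt_or_ge s (n - m) with hlt | hge
  · rcases Nat.lt_or_ge s' (n - m) with hlt' | hge'
    · rw [Nat.mod_eq_of_lt hlt, Nat.mod_eq_of_lt hlt'] at h2'; exact h2'
    · have : s' = n - m := by omega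
      subst this
      rw [Nat.mod_eq_of_lt hlt, Nat.mod_self] at h2'; omega
  · have : s = n - m := by omega
    subst this
    rw [Nat.mod_self] at h2'
    rcases Nat.lt_or_ge s' (n - m) with hlt' | hge'
    · rw [Nat.mod_eq_of_lt hlt'] at h2'; omega
    · omega

theorem phi_inj {n : ℕ} (hn : 2 ≤ n) {a a' : Fin n → ℕ} (ha : a ∈ Vn n) (ha' : a' ∈ Vn n)
    (h : Phi n a = Phi n a') : a = a' := by
  have key : ∀ m : ℕ, ∀ j : Fin n, n - 1 - (j : ℕ) = m → a j = a' j := by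
    intro m
    induction m using Nat.strong_induction_on with
    | _ m ih =>
      intro j hj
      have hjlt := j.isLt
      have hjv : (j : ℕ) = n - 1 - m := by omega
      -- split the list
      set jv := (j : ℕ) with hjvdef
      have hlen : jv < (List.finRange n).length := by simp [jv]
      have hsplit : List.finRange n =
          (List.finRange n).take jv ++ j :: (List.finRange n).drop (jv + 1) := by
        conv_lhs => rw [← List.take_append_drop jv (List.finRange n)]
        congr 1
        rw [List.drop_eq_getElem_cons hlen]
        congr 1
        simp
        rfl
      -- products
      have hphi : ∀ b : Fin n → ℕ, Phi n b =
          (((List.finRange n).take jv).map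
            (fun (x : Fin n) => kappa n (n - 1 - (x : ℕ)) (b x))).prod *
          (kappa n (n - 1 - jv) (b j) *
          (((List.finRange n).drop (jv + 1)).map
            (fun (x : Fin n) => kappa n (n - 1 - (x : ℕ)) (b x))).prod) := by
        intro b
        rw [Phi]
        conv_lhs => rw [hsplit]
        rw [List.map_append, List.prod_append, List.map_cons, List.prod_cons]
      -- IH equality of the drop parts
      have hdropmem : ∀ x : Fin n, x ∈ (List.finRange n).drop (jv + 1) → jv + 1 ≤ (x : ℕ) := by
        intro x hx
        obtain ⟨i, hi, hix⟩ := List.mem_iff_getElem.mp hx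
        have hval := congrArg Fin.val hix
        simp at hval hi
        omega
      have hB : (((List.finRange n).drop (jv + 1)).map
            (fun (x : Fin n) => kappa n (n - 1 - (x : ℕ)) (a x))).prod =
          (((List.finRange n).drop (jv + 1)).map
            (fun (x : Fin n) => kappa n (n - 1 - (x : ℕ)) (a' x))).prod := by
        congr 1
        apply List.map_congr_left
        intro x hx
        have hxge := hdropmem x hx
        have : a x = a' x := by
          apply ih (n - 1 - (x : ℕ)) (by omega) x rfl
        rw [this]
      -- cancel B then A
      have heq : (((List.finRange n).take jv).map
            (fun (x : Fin n) => kappa n (n - 1 - (x : ℕ)) (a x))).prod *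
            kappa n (n - 1 - jv) (a j) =
          (((List.finRange n).take jv).map
            (fun (x : Fin n) => kappa n (n - 1 - (x : ℕ)) (a' x))).prod *
            kappa n (n - 1 - jv) (a' j) := by
        have := h
        rw [hphi a, hphi a', hB, ← mul_assoc, ← mul_assoc] at this
        exact mul_right_cancel this
      -- the point m as Fin n
      have hmlt : m < n := by omega
      set mF : Fin n := ⟨m, hmlt⟩ with hmF
      have htakemem : ∀ x : Fin n, x ∈ (List.finRange n).take jv → (x : ℕ) < jv := by
        intro x hx
        obtain ⟨i, hi, hix⟩ := List.mem_iff_getElem.mp hx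
        have hval := congrArg Fin.val hix
        simp at hval hi
        omega
      have hAfix : ∀ b : Fin n → ℕ,
          (((List.finRange n).take jv).map
            (fun (x : Fin n) => kappa n (n - 1 - (x : ℕ)) (b x))).prod mF = mF := by
        intro b
        apply prod_fix
        intro p hp
        obtain ⟨x, hx, hpx⟩ := List.mem_map.mp hp
        rw [← hpx]
        apply kappa_fix
        have := htakemem x hx
        simp only [hmF]
        omega
      -- evaluate at y := f⁻¹ mF
      set f := kappa n (n - 1 - jv) (a j) with hf
      set f' := kappa n (n - 1 - jv) (a' j) with hf'
      set y := f.symm mF with hy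
      have hfy : f y = mF := Equiv.apply_symm_apply _ _
      have happ := congrArg (fun (p : Equiv.Perm (Fin n)) => p y) heq
      simp only [Equiv.Perm.mul_apply] at happ
      rw [hfy, hAfix a] at happ
      have hf'y : f' y = mF := by
        have h2 : (((List.finRange n).take jv).map
            (fun (x : Fin n) => kappa n (n - 1 - (x : ℕ)) (a' x))).prod (f' y) =
            (((List.finRange n).take jv).map
            (fun (x : Fin n) => kappa n (n - 1 - (x : ℕ)) (a' x))).prod mF := by
          rw [← happ, hAfix a']
        exact Equiv.injective _ h2
      have hyge : m ≤ (y : ℕ) := by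
        by_contra hc
        have : f y = y := kappa_fix n (n - 1 - jv) (a j) y (by omega)
        rw [hfy] at this
        have := congrArg Fin.val this
        simp [hmF] at this
        omega
      have hb1 := ha j
      have hb2 := ha' j
      have hcan : kappa n m (a j) y = kappa n m (a' j) y := by
        rw [← hj]
        rw [hf] at hfy
        rw [hf'] at hf'y
        rw [hfy, hf'y]
      exact kappa_cancel n m (a j) (a' j) hb1.1 hb2.1 (by omega) (by omega) y hyge hcan
  funext j
  exact key (n - 1 - (j : ℕ)) j rfl

def Eenc (n : ℕ) (b : ∀ j : Fin n, Fin ((j : ℕ) + 1)) : Fin n → ℕ := fun j => (b j : ℕ) + 1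

lemma Eenc_mem (n : ℕ) (b : ∀ j : Fin n, Fin ((j : ℕ) + 1)) : Eenc n b ∈ Vn n := by
  intro j
  unfold Eenc
  have := (b j).isLt
  omega

lemma Eenc_inj (n : ℕ) : Function.Injective (Eenc n) := by
  intro b b' h
  funext j
  have := congrFun h j
  unfold Eenc at this
  exact Fin.ext (by omega)

lemma Vn_eq_range (n : ℕ) {a : Fin n → ℕ} (ha : a ∈ Vn n) : ∃ b, Eenc n b = a := by
  refine ⟨fun j => ⟨a j - 1, by have := ha j; omega⟩, ?_⟩
  funext j
  unfold Eenc
  have := ha j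
  simp
  omega

theorem phi_surj {n : ℕ} (hn : 2 ≤ n) (π : Equiv.Perm (Fin n)) :
    ∃ a ∈ Vn n, Phi n a = π := by
  have hinj : Function.Injective (fun b : (∀ j : Fin n, Fin ((j : ℕ) + 1)) => Phi n (Eenc n b)) := by
    intro b b' h
    exact Eenc_inj n (phi_inj hn (Eenc_mem n b) (Eenc_mem n b') h)
  have hcard : Fintype.card (∀ j : Fin n, Fin ((j : ℕ) + 1)) = Fintype.card (Equiv.Perm (Fin n)) := by
    rw [Fintype.card_pi, Fintype.card_perm, Fintype.card_fin]
    simp only [Fintype.card_fin]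
    rw [Fin.prod_univ_eq_prod_range (fun i => i + 1) n]
    exact Finset.prod_range_add_one_eq_factorial n
  have hbij := (Fintype.bijective_iff_injective_and_card _).mpr ⟨hinj, hcard⟩
  obtain ⟨b, hb⟩ := hbij.2 π
  exact ⟨Eenc n b, Eenc_mem n b, hb⟩

/-- `W_{T,n}`: vectors in `V_n` whose parity (sum of components) is `≡ T (mod n)`. -/
def Wset (n : ℕ) (T : ℤ) : Set (Fin n → ℕ) :=
  {a | a ∈ Vn n ∧ Int.ModEq (n : ℤ) ((∑ j, a j : ℕ) : ℤ) T}

/-- `C_{T,n} = {(Φ(α))⁻¹ : α ∈ W_{T,n}}`. -/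
def Cset (n : ℕ) (T : ℤ) : Set (Equiv.Perm (Fin n)) :=
  {π | ∃ a ∈ Wset n T, π = (Phi n a)⁻¹}

/-- `cinv n π j = π⁻¹(j)` as a natural number (junk value `0` out of range). -/
def cinv (n : ℕ) (π : Equiv.Perm (Fin n)) (j : ℕ) : ℕ :=
  if h : j < n then (π.symm ⟨j, h⟩ : ℕ) else 0

/-- The `i`-th component of a vector indexed by `Fin n` (junk value `0` out of range). -/
def Rcomp (n : ℕ) (v : Fin n → ℕ) (i : ℕ) : ℕ :=
  if h : i < n then v ⟨i, h⟩ else 0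

theorem stmt_5 (n : ℕ) (hn : 2 ≤ n) (π : Equiv.Perm (Fin n)) :
    ∃! T : Fin n, π ∈ Cset n ((T : ℕ) : ℤ) := by
  obtain ⟨a, haV, haP⟩ := phi_surj hn π⁻¹
  set S : ℕ := ∑ j, a j with hS
  refine ⟨⟨S % n, Nat.mod_lt _ (by omega)⟩, ?_, ?_⟩
  · refine ⟨a, ⟨haV, ?_⟩, ?_⟩
    · show (S : ℤ) % (n : ℤ) = ((S % n : ℕ) : ℤ) % (n : ℤ)
      rw [Int.natCast_mod, Int.emod_emod_of_dvd _ dvd_rfl]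
    · rw [haP, inv_inv]
  · rintro T' ⟨a', ⟨ha'V, ha'mod⟩, ha'P⟩
    have hPa' : Phi n a' = π⁻¹ := by rw [ha'P, inv_inv]
    have haa : a' = a := phi_inj hn ha'V haV (hPa'.trans haP.symm)
    subst haa
    have hmod : (S : ℤ) % (n : ℤ) = ((T' : ℕ) : ℤ) % (n : ℤ) := ha'mod
    have hT'lt : ((T' : ℕ) : ℤ) < (n : ℤ) := by exact_mod_cast T'.isLt
    have h2 : ((T' : ℕ) : ℤ) % (n : ℤ) = ((T' : ℕ) : ℤ) :=
      Int.emod_eq_of_lt (by positivity) hT'lt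
    have h3 : ((S % n : ℕ) : ℤ) = ((T' : ℕ) : ℤ) := by
      rw [Int.natCast_mod, hmod, h2]
    have h4 : S % n = (T' : ℕ) := by exact_mod_cast h3
    exact Fin.ext h4.symm
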